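/- Let C be a perfect code of covering radius one in H(n,q) and C' a perfect code of covering radius one in H(n',q'), with n(q−1) = n'(q'−1). Then C × C' is a completely regular code in the product graph H(n,q) × H(n',q') with covering radius 2 and intersection numbers γ_1 = 1, γ_2 = 2, β_0 = 2n(q−1), β_1 = n(q−1), α_0 = 0, α_1 = n(q−1) − 1, α_2 = 2n(q−1) − 2. -/

import Mathlib

open SimpleGraph

/-- The Hamming graph on `Fin n → Q`: words adjacent iff they differ in one coordinate. -/
def hammingGraph (n : ℕ) (Q : Type*) [DecidableEq Q] : SimpleGraph (Fin n → Q) where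
  Adj x y := hammingDist x y = 1
  symm := ⟨fun x y (h : hammingDist x y = 1) => by show hammingDist y x = 1; rwa [hammingDist_comm]⟩
  loopless := ⟨fun x (h : hammingDist x x = 1) => by rw [hammingDist_self] at h; exact absurd h.symm one_ne_zero⟩

/-- Distance from a vertex to a code, via graph distance. -/
noncomputable def distToCode {V : Type*} (G : SimpleGraph V) (C : Set V) (x : V) : ℕ :=
  sInf {d | ∃ c ∈ C, G.dist x c = d}

/-- The `i`-th cell of the distance partition of a code. -/
noncomputable def codeCell {V : Type*} (G : SimpleGraph V) (C : Set V) (i : ℕ) : Set V :=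
  {x | distToCode G C x = i}

/-- The number of neighbors of `x` lying in `S`. -/
noncomputable def nbrCount {V : Type*} (G : SimpleGraph V) (x : V) (S : Set V) : ℕ :=
  (G.neighborSet x ∩ S).ncard

/-- Covering radius of a code. -/
noncomputable def covRad {V : Type*} (G : SimpleGraph V) (C : Set V) : ℕ :=
  sSup {d | ∃ x, distToCode G C x = d}

/-- A code is completely regular if its distance partition is equitable. -/
def IsCompRegCode {V : Type*} (G : SimpleGraph V) (C : Set V) : Prop :=
  ∀ i j : ℕ, ∀ x ∈ codeCell G C i, ∀ y ∈ codeCell G C i,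
    nbrCount G x (codeCell G C j) = nbrCount G y (codeCell G C j)

/-- Intersection numbers `γ, α, β` of a code with covering radius `ρ`. -/
def HasIntNums {V : Type*} (G : SimpleGraph V) (C : Set V) (ρ : ℕ) (γ α β : ℕ → ℕ) : Prop :=
  γ 0 = 0 ∧ β ρ = 0 ∧
  ∀ i ≤ ρ, ∀ x ∈ codeCell G C i,
    (1 ≤ i → nbrCount G x (codeCell G C (i-1)) = γ i) ∧
    nbrCount G x (codeCell G C i) = α i ∧
    (i < ρ → nbrCount G x (codeCell G C (i+1)) = β i)

/-- Equitable partition of the vertex set of a graph. -/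
def IsEquitable {V : Type*} (G : SimpleGraph V) (Pa : Set (Set V)) : Prop :=
  ∀ P ∈ Pa, ∀ P' ∈ Pa, ∀ x ∈ P, ∀ y ∈ P, nbrCount G x P' = nbrCount G y P'

/-- Quotient graph of a graph by a partition of its vertex set. -/
def quotientGraph {V : Type*} (G : SimpleGraph V) (Pa : Set (Set V)) : SimpleGraph Pa where
  Adj P P' := P ≠ P' ∧ ∃ x ∈ (P : Set V), ∃ y ∈ (P' : Set V), G.Adj x y
  symm := ⟨by
    rintro P P' ⟨hne, x, hx, y, hy, hxy⟩
    exact ⟨hne.symm, y, hy, x, hx, hxy.symm⟩⟩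
  loopless := ⟨by rintro P ⟨hne, -⟩; exact hne rfl⟩

/-- Completely regular partition with common intersection numbers. -/
def IsCompRegPartition {V : Type*} (G : SimpleGraph V) (Pa : Set (Set V))
    (ρ : ℕ) (γ α β : ℕ → ℕ) : Prop :=
  Setoid.IsPartition Pa ∧ IsEquitable G Pa ∧
    ∀ P ∈ Pa, IsCompRegCode G P ∧ covRad G P = ρ ∧ HasIntNums G P ρ γ α β

/-- Distance-regular graph of diameter `D` with intersection arrays `b`, `c`. -/
def IsDistRegular {V : Type*} (G : SimpleGraph V) (D : ℕ) (b c : ℕ → ℕ) : Prop :=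
  G.Connected ∧ (∀ x y : V, G.dist x y ≤ D) ∧ (∃ x y : V, G.dist x y = D) ∧
  ∀ i ≤ D, ∀ x y : V, G.dist x y = i →
    (1 ≤ i → nbrCount G y {z | G.dist x z = i - 1} = c i) ∧
    (i < D → nbrCount G y {z | G.dist x z = i + 1} = b i)

/-- The tridiagonal quotient matrix of a completely regular code. -/
noncomputable def quotMatrix (ρ : ℕ) (γ α β : ℕ → ℕ) : Matrix (Fin (ρ+1)) (Fin (ρ+1)) ℝ :=
  Matrix.of fun i j =>
    if (j : ℕ) + 1 = (i : ℕ) then (γ (i : ℕ) : ℝ)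
    else if (i : ℕ) = (j : ℕ) then (α (i : ℕ) : ℝ)
    else if (i : ℕ) + 1 = (j : ℕ) then (β (i : ℕ) : ℝ)
    else 0


section Aux

variable {n q : ℕ}

lemma hg_adj {x y : Fin n → Fin q} :
    (hammingGraph n (Fin q)).Adj x y ↔ hammingDist x y = 1 := Iff.rfl

lemma hd_update_self (x : Fin n → Fin q) (i : Fin n) (a : Fin q) (ha : a ≠ x i) :
    hammingDist x (Function.update x i a) = 1 := by
  unfold hammingDist
  rw [Finset.card_eq_one]
  refine ⟨i, ?_⟩
  ext j
  simp only [Finset.mem_filter, Finset.mem_univ, true_and, Finset.mem_singleton]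
  constructor
  · intro h
    by_contra hj
    rw [Function.update_of_ne hj] at h
    exact h rfl
  · rintro rfl
    rw [Function.update_self]
    exact fun h => ha h.symm

lemma hd_eq_one_iff {x y : Fin n → Fin q} :
    hammingDist x y = 1 ↔ ∃ i a, a ≠ x i ∧ y = Function.update x i a := by
  constructor
  · intro h
    rw [hammingDist, Finset.card_eq_one] at h
    obtain ⟨i, hi⟩ := h
    have hmem : ∀ j, x j ≠ y j ↔ j = i := by
      intro j
      constructor
      · intro hj
        have : j ∈ ({i} : Finset (Fin n)) := by
          rw [← hi]; simp [hj]
        simpa using this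
      · rintro rfl
        have hj2 : j ∈ Finset.filter (fun j => x j ≠ y j) Finset.univ := by
          rw [hi]; exact Finset.mem_singleton_self j
        simpa using hj2
    refine ⟨i, y i, ?_, ?_⟩
    · exact fun h' => ((hmem i).mpr rfl) h'.symm
    · funext j
      by_cases hj : j = i
      · subst hj; rw [Function.update_self]
      · rw [Function.update_of_ne hj]
        by_contra hne
        exact hj ((hmem j).mp (fun h => hne h.symm))
  · rintro ⟨i, a, ha, rfl⟩
    exact hd_update_self x i a ha

lemma hd_step {x y : Fin n → Fin q} {i : Fin n} (hi : x i ≠ y i) :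
    hammingDist x y = hammingDist (Function.update x i (y i)) y + 1 := by
  unfold hammingDist
  have hset : Finset.filter (fun j => Function.update x i (y i) j ≠ y j) Finset.univ
      = (Finset.filter (fun j => x j ≠ y j) Finset.univ).erase i := by
    ext j
    simp only [Finset.mem_filter, Finset.mem_univ, true_and, Finset.mem_erase]
    by_cases hj : j = i
    · subst hj; simp [Function.update_self]
    · rw [Function.update_of_ne hj]
      simp [hj]
  rw [hset, Finset.card_erase_of_mem (by simp [hi])]
  have : 1 ≤ (Finset.filter (fun j => x j ≠ y j) Finset.univ).card := by
    rw [Nat.one_le_iff_ne_zero, ← Nat.pos_iff_ne_zero, Finset.card_pos]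
    exact ⟨i, by simp [hi]⟩
  omega

lemma exists_walk_hd : ∀ (d : ℕ) (x y : Fin n → Fin q), hammingDist x y = d →
    ∃ w : (hammingGraph n (Fin q)).Walk x y, w.length = d := by
  intro d
  induction d with
  | zero =>
    intro x y h
    obtain rfl := eq_of_hammingDist_eq_zero h
    exact ⟨Walk.nil, rfl⟩
  | succ d ih =>
    intro x y h
    have hne : ∃ i, x i ≠ y i := by
      by_contra hc
      push_neg at hc
      rw [show x = y from funext hc, hammingDist_self] at h
      exact absurd h.symm (Nat.succ_ne_zero d)
    obtain ⟨i, hi⟩ := hne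
    have h1 : hammingDist x (Function.update x i (y i)) = 1 :=
      hd_update_self x i (y i) (Ne.symm hi)
    have h2 : hammingDist (Function.update x i (y i)) y = d := by
      have := hd_step hi; omega
    obtain ⟨w, hw⟩ := ih _ y h2
    exact ⟨Walk.cons (hg_adj.mpr h1) w, by simp [hw]⟩

lemma sphere_ncard (hn : 1 ≤ n) (hq : 2 ≤ q) (x : Fin n → Fin q) :
    ({y | hammingDist x y = 1} : Set (Fin n → Fin q)).ncard = n * (q - 1) := by
  have hrange : ({y | hammingDist x y = 1} : Set (Fin n → Fin q)) =
      Set.range (fun p : (Σ i : Fin n, {a : Fin q // a ≠ x i}) =>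
        Function.update x p.1 p.2.1) := by
    ext y
    simp only [Set.mem_setOf_eq, Set.mem_range, hd_eq_one_iff]
    constructor
    · rintro ⟨i, a, ha, rfl⟩; exact ⟨⟨i, a, ha⟩, rfl⟩
    · rintro ⟨⟨i, a, ha⟩, rfl⟩; exact ⟨i, a, ha, rfl⟩
  have hinj : Function.Injective (fun p : (Σ i : Fin n, {a : Fin q // a ≠ x i}) =>
      Function.update x p.1 p.2.1) := by
    rintro ⟨i, a, ha⟩ ⟨j, b, hb⟩ h
    simp only at h
    by_cases hij : i = j
    · subst hij
      have : a = b := by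
        have := congrFun h i
        rwa [Function.update_self, Function.update_self] at this
      simp [this]
    · exfalso
      have := congrFun h i
      rw [Function.update_self, Function.update_of_ne hij] at this
      exact ha this
  rw [hrange, ← Nat.card_coe_set_eq, Nat.card_range_of_injective hinj]
  rw [Nat.card_eq_fintype_card, Fintype.card_sigma]
  have : ∀ i : Fin n, Fintype.card {a : Fin q // a ≠ x i} = q - 1 := by
    intro i
    have := Fintype.card_subtype_compl (fun a : Fin q => a = x i)
    rw [Fintype.card_subtype_eq (x i), Fintype.card_fin] at this
    exact this
  simp only [this, Finset.sum_const, Finset.card_univ, Fintype.card_fin, smul_eq_mul]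

end Aux

section CodeAux

open Classical in
noncomputable def eCode {V : Type*} (C : Set V) (x : V) : ℕ := if x ∈ C then 0 else 1

lemma eCode_of_mem {V : Type*} {C : Set V} {x : V} (hx : x ∈ C) : eCode C x = 0 := by
  simp [eCode, hx]

lemma eCode_of_not_mem {V : Type*} {C : Set V} {x : V} (hx : x ∉ C) : eCode C x = 1 := by
  simp [eCode, hx]

lemma eCode_cases {V : Type*} (C : Set V) (x : V) :
    (eCode C x = 0 ∧ x ∈ C) ∨ (eCode C x = 1 ∧ x ∉ C) := by
  by_cases hx : x ∈ C
  · exact Or.inl ⟨eCode_of_mem hx, hx⟩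
  · exact Or.inr ⟨eCode_of_not_mem hx, hx⟩

lemma eCode_le_one {V : Type*} (C : Set V) (x : V) : eCode C x ≤ 1 := by
  rcases eCode_cases C x with ⟨h, -⟩ | ⟨h, -⟩ <;> omega

variable {n q : ℕ} {C : Set (Fin n → Fin q)}

lemma exists_code_hd (hperf : ∀ x : Fin n → Fin q, ∃! c : Fin n → Fin q, c ∈ C ∧ hammingDist x c ≤ 1)
    (x : Fin n → Fin q) : ∃ c ∈ C, hammingDist x c = eCode C x := by
  by_cases hx : x ∈ C
  · exact ⟨x, hx, by rw [hammingDist_self, eCode_of_mem hx]⟩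
  · obtain ⟨c, ⟨hc, hle⟩, -⟩ := hperf x
    refine ⟨c, hc, ?_⟩
    rw [eCode_of_not_mem hx]
    have : hammingDist x c ≠ 0 := fun h => hx (eq_of_hammingDist_eq_zero h ▸ hc)
    omega

lemma code_hd_lower {x c : Fin n → Fin q} (hc : c ∈ C) : eCode C x ≤ hammingDist x c := by
  by_cases hx : x ∈ C
  · rw [eCode_of_mem hx]; omega
  · rw [eCode_of_not_mem hx]
    have : hammingDist x c ≠ 0 := fun h => hx (eq_of_hammingDist_eq_zero h ▸ hc)
    omega

lemma cntC (hδ : ∀ x ∈ C, ∀ y ∈ C, x ≠ y → 3 ≤ hammingDist x y)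
    (hperf : ∀ x : Fin n → Fin q, ∃! c : Fin n → Fin q, c ∈ C ∧ hammingDist x c ≤ 1)
    (x : Fin n → Fin q) :
    (({y | hammingDist x y = 1} : Set (Fin n → Fin q)) ∩ C).ncard = eCode C x := by
  by_cases hx : x ∈ C
  · rw [eCode_of_mem hx]
    have : ({y | hammingDist x y = 1} : Set (Fin n → Fin q)) ∩ C = ∅ := by
      ext y
      simp only [Set.mem_inter_iff, Set.mem_setOf_eq, Set.mem_empty_iff_false, iff_false, not_and]
      intro hd1 hyC
      have hxy : x ≠ y := fun h => by rw [h, hammingDist_self] at hd1; omega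
      have := hδ x hx y hyC hxy
      omega
    rw [this, Set.ncard_empty]
  · rw [eCode_of_not_mem hx]
    obtain ⟨c, ⟨hc, hle⟩, huniq⟩ := hperf x
    have hd1 : hammingDist x c = 1 := by
      have : hammingDist x c ≠ 0 := fun h => hx (eq_of_hammingDist_eq_zero h ▸ hc)
      omega
    have : ({y | hammingDist x y = 1} : Set (Fin n → Fin q)) ∩ C = {c} := by
      ext y
      simp only [Set.mem_inter_iff, Set.mem_setOf_eq, Set.mem_singleton_iff]
      constructor
      · rintro ⟨h1, hyC⟩
        exact huniq y ⟨hyC, by omega⟩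
      · rintro rfl
        exact ⟨hd1, hc⟩
    rw [this, Set.ncard_singleton]

lemma cntCc (hn : 1 ≤ n) (hq : 2 ≤ q)
    (hδ : ∀ x ∈ C, ∀ y ∈ C, x ≠ y → 3 ≤ hammingDist x y)
    (hperf : ∀ x : Fin n → Fin q, ∃! c : Fin n → Fin q, c ∈ C ∧ hammingDist x c ≤ 1)
    (x : Fin n → Fin q) :
    (({y | hammingDist x y = 1} : Set (Fin n → Fin q)) ∩ Cᶜ).ncard
      = n * (q - 1) - eCode C x := by
  have hsplit := Set.ncard_inter_add_ncard_diff_eq_ncard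
    ({y | hammingDist x y = 1} : Set (Fin n → Fin q)) C (Set.toFinite _)
  rw [cntC hδ hperf x, sphere_ncard hn hq x] at hsplit
  rw [← Set.diff_eq]  -- Cᶜ inter: s ∩ Cᶜ = s \ C
  omega

lemma exists_not_code (hn : 1 ≤ n) (hq : 2 ≤ q)
    (hδ : ∀ x ∈ C, ∀ y ∈ C, x ≠ y → 3 ≤ hammingDist x y)
    (hperf : ∀ x : Fin n → Fin q, ∃! c : Fin n → Fin q, c ∈ C ∧ hammingDist x c ≤ 1) :
    ∃ x, x ∉ C := by
  obtain ⟨c, ⟨hc, -⟩, -⟩ := hperf (fun _ => ⟨0, by omega⟩)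
  set i : Fin n := ⟨0, hn⟩
  have : ∃ a : Fin q, a ≠ c i := by
    by_cases h0 : c i = ⟨0, by omega⟩
    · exact ⟨⟨1, by omega⟩, by rw [h0]; exact Fin.ne_of_val_ne (by simp)⟩
    · exact ⟨⟨0, by omega⟩, fun h => h0 h.symm⟩
  obtain ⟨a, ha⟩ := this
  refine ⟨Function.update c i a, fun hmem => ?_⟩
  have hne : Function.update c i a ≠ c := by
    intro h
    have := congrFun h i
    rw [Function.update_self] at this
    exact ha this
  have h3 := hδ _ hmem c hc hne
  have h1 : hammingDist c (Function.update c i a) = 1 := hd_update_self c i a ha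
  rw [hammingDist_comm] at h1
  omega

end CodeAux

section ProdAux

variable {n q n' q' : ℕ}

lemma boxWalk_lower {p r : (Fin n → Fin q) × (Fin n' → Fin q')}
    (w : (hammingGraph n (Fin q) □ hammingGraph n' (Fin q')).Walk p r) :
    hammingDist p.1 r.1 + hammingDist p.2 r.2 ≤ w.length := by
  induction w with
  | nil => simp
  | @cons u v r hadj w ih =>
    rw [Walk.length_cons]
    rcases (boxProd_adj.mp hadj) with ⟨ha, he⟩ | ⟨ha, he⟩
    · have h1 : hammingDist u.1 v.1 = 1 := ha
      have ht := hammingDist_triangle u.1 v.1 r.1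
      rw [he] at *
      omega
    · have h1 : hammingDist u.2 v.2 = 1 := ha
      have ht := hammingDist_triangle u.2 v.2 r.2
      rw [he] at *
      omega

lemma boxDist (x c : Fin n → Fin q) (x' c' : Fin n' → Fin q') :
    (hammingGraph n (Fin q) □ hammingGraph n' (Fin q')).dist (x, x') (c, c')
      = hammingDist x c + hammingDist x' c' := by
  obtain ⟨w1, hw1⟩ := exists_walk_hd (hammingDist x c) x c rfl
  obtain ⟨w2, hw2⟩ := exists_walk_hd (hammingDist x' c') x' c' rfl
  have hlen : ((w1.boxProdLeft _ _).append (w2.boxProdRight _ _) :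
      (hammingGraph n (Fin q) □ hammingGraph n' (Fin q')).Walk (x, x') (c, c')).length
      = hammingDist x c + hammingDist x' c' := by
    rw [Walk.length_append]
    simp only [Walk.boxProdLeft, Walk.boxProdRight, Walk.length_map]
    exact congrArg₂ (· + ·) ((Walk.length_map _ _).trans hw1) ((Walk.length_map _ _).trans hw2)
  apply le_antisymm
  · rw [← hlen]; exact SimpleGraph.dist_le _
  · obtain ⟨w, hw⟩ := Reachable.exists_walk_length_eq_dist
      ⟨(w1.boxProdLeft _ _).append (w2.boxProdRight _ _)⟩
    rw [← hw]
    exact boxWalk_lower w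

variable {C : Set (Fin n → Fin q)} {C' : Set (Fin n' → Fin q')}

lemma prod_distToCode
    (hperf : ∀ x : Fin n → Fin q, ∃! c : Fin n → Fin q, c ∈ C ∧ hammingDist x c ≤ 1)
    (hperf' : ∀ x : Fin n' → Fin q', ∃! c : Fin n' → Fin q', c ∈ C' ∧ hammingDist x c ≤ 1)
    (x : Fin n → Fin q) (x' : Fin n' → Fin q') :
    distToCode (hammingGraph n (Fin q) □ hammingGraph n' (Fin q')) (C ×ˢ C') (x, x')
      = eCode C x + eCode C' x' := by
  obtain ⟨c, hc, hdc⟩ := exists_code_hd hperf x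
  obtain ⟨c', hc', hdc'⟩ := exists_code_hd hperf' x'
  have hmem : eCode C x + eCode C' x' ∈
      {d | ∃ p ∈ C ×ˢ C',
        (hammingGraph n (Fin q) □ hammingGraph n' (Fin q')).dist (x, x') p = d} := by
    exact ⟨(c, c'), ⟨hc, hc'⟩, by rw [boxDist, hdc, hdc']⟩
  unfold distToCode
  apply le_antisymm
  · exact Nat.sInf_le hmem
  · apply le_csInf ⟨_, hmem⟩
    rintro d ⟨⟨a, b⟩, ⟨ha, hb⟩, rfl⟩
    rw [boxDist]
    exact add_le_add (code_hd_lower ha) (code_hd_lower hb)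

end ProdAux

section Master

variable {n q n' q' : ℕ}

lemma prod_nbr_split (x : Fin n → Fin q) (x' : Fin n' → Fin q')
    (S : Set ((Fin n → Fin q) × (Fin n' → Fin q'))) :
    nbrCount (hammingGraph n (Fin q) □ hammingGraph n' (Fin q')) (x, x') S =
      ({y | hammingDist x y = 1} ∩ {y | (y, x') ∈ S}).ncard +
      ({y' | hammingDist x' y' = 1} ∩ {y' | (x, y') ∈ S}).ncard := by
  unfold nbrCount
  rw [neighborSet_boxProd, Set.union_inter_distrib_right]
  have hdisj : Disjoint
      (((hammingGraph n (Fin q)).neighborSet x ×ˢ {(x, x').2}) ∩ S)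
      (({(x, x').1} ×ˢ (hammingGraph n' (Fin q')).neighborSet x') ∩ S) := by
    rw [Set.disjoint_left]
    rintro ⟨a, b⟩ ⟨hab, -⟩ ⟨hab', -⟩
    obtain ⟨ha, -⟩ := hab
    obtain ⟨ha', -⟩ := hab'
    simp only [Set.mem_singleton_iff] at ha'
    exact ((hammingGraph n (Fin q)).ne_of_adj ha).symm (by simpa using ha')
  rw [Set.ncard_union_eq hdisj (Set.toFinite _) (Set.toFinite _)]
  congr 1
  · have himg : ((hammingGraph n (Fin q)).neighborSet x ×ˢ {(x, x').2}) ∩ S =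
        (fun y => (y, x')) '' ({y | hammingDist x y = 1} ∩ {y | (y, x') ∈ S}) := by
      ext ⟨a, b⟩
      simp only [Set.mem_inter_iff, Set.mem_prod, Set.mem_singleton_iff, mem_neighborSet,
        Set.mem_image, Set.mem_setOf_eq]
      constructor
      · rintro ⟨⟨hadj, rfl⟩, hS⟩
        exact ⟨a, ⟨hadj, hS⟩, rfl⟩
      · rintro ⟨y, ⟨hadj, hS⟩, heq⟩
        obtain ⟨rfl, rfl⟩ := Prod.mk.injEq .. ▸ heq
        exact ⟨⟨hadj, rfl⟩, hS⟩
    rw [himg, Set.ncard_image_of_injective _ (fun a b h => (Prod.ext_iff.mp h).1)]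
  · have himg : (({(x, x').1} : Set _) ×ˢ (hammingGraph n' (Fin q')).neighborSet x') ∩ S =
        (fun y' => (x, y')) '' ({y' | hammingDist x' y' = 1} ∩ {y' | (x, y') ∈ S}) := by
      ext ⟨a, b⟩
      simp only [Set.mem_inter_iff, Set.mem_prod, Set.mem_singleton_iff, mem_neighborSet,
        Set.mem_image, Set.mem_setOf_eq]
      constructor
      · rintro ⟨⟨rfl, hadj⟩, hS⟩
        exact ⟨b, ⟨hadj, hS⟩, rfl⟩
      · rintro ⟨y, ⟨hadj, hS⟩, heq⟩
        obtain ⟨rfl, rfl⟩ := Prod.mk.injEq .. ▸ heq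
        exact ⟨⟨rfl, hadj⟩, hS⟩
    rw [himg, Set.ncard_image_of_injective _ (fun a b h => (Prod.ext_iff.mp h).2)]

/-- The table of neighbour counts of the product code. -/
def tbl (k i j : ℕ) : ℕ :=
  if i = 0 ∧ j = 1 then 2 * k
  else if i = 1 ∧ j = 0 then 1
  else if i = 1 ∧ j = 1 then k - 1
  else if i = 1 ∧ j = 2 then k
  else if i = 2 ∧ j = 1 then 2
  else if i = 2 ∧ j = 2 then 2 * k - 2
  else 0

variable {C : Set (Fin n → Fin q)} {C' : Set (Fin n' → Fin q')}

lemma level_set (C : Set (Fin n → Fin q)) (b j : ℕ) :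
    {y : Fin n → Fin q | eCode C y + b = j} =
      if j = b then C else if j = b + 1 then Cᶜ else (∅ : Set (Fin n → Fin q)) := by
  ext y
  rcases eCode_cases C y with ⟨h, hm⟩ | ⟨h, hm⟩ <;>
    split_ifs with h1 h2 <;>
    simp only [Set.mem_setOf_eq, h, Set.mem_compl_iff, Set.mem_empty_iff_false, iff_true,
      iff_false, hm, not_true, not_false_iff] <;>
    omega

lemma cnt_level (hn : 1 ≤ n) (hq : 2 ≤ q)
    (hδ : ∀ x ∈ C, ∀ y ∈ C, x ≠ y → 3 ≤ hammingDist x y)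
    (hperf : ∀ x : Fin n → Fin q, ∃! c : Fin n → Fin q, c ∈ C ∧ hammingDist x c ≤ 1)
    (x : Fin n → Fin q) (b j : ℕ) :
    (({y | hammingDist x y = 1} : Set (Fin n → Fin q)) ∩ {y | eCode C y + b = j}).ncard =
      if j = b then eCode C x else if j = b + 1 then n * (q - 1) - eCode C x else 0 := by
  rw [level_set C b j]
  split_ifs
  · exact cntC hδ hperf x
  · exact cntCc hn hq hδ hperf x
  · rw [Set.inter_empty, Set.ncard_empty]

set_option maxHeartbeats 1000000 in
lemma master (hn : 1 ≤ n) (hq : 2 ≤ q) (hn' : 1 ≤ n') (hq' : 2 ≤ q')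
    (hδ : ∀ x ∈ C, ∀ y ∈ C, x ≠ y → 3 ≤ hammingDist x y)
    (hperf : ∀ x : Fin n → Fin q, ∃! c : Fin n → Fin q, c ∈ C ∧ hammingDist x c ≤ 1)
    (hδ' : ∀ x ∈ C', ∀ y ∈ C', x ≠ y → 3 ≤ hammingDist x y)
    (hperf' : ∀ x : Fin n' → Fin q', ∃! c : Fin n' → Fin q', c ∈ C' ∧ hammingDist x c ≤ 1)
    (hbal : n * (q - 1) = n' * (q' - 1))
    (x : Fin n → Fin q) (x' : Fin n' → Fin q') (j : ℕ) :
    nbrCount (hammingGraph n (Fin q) □ hammingGraph n' (Fin q')) (x, x')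
        (codeCell (hammingGraph n (Fin q) □ hammingGraph n' (Fin q')) (C ×ˢ C') j) =
      tbl (n * (q - 1)) (eCode C x + eCode C' x') j := by
  have hcell : codeCell (hammingGraph n (Fin q) □ hammingGraph n' (Fin q')) (C ×ˢ C') j =
      {p : (Fin n → Fin q) × (Fin n' → Fin q') | eCode C p.1 + eCode C' p.2 = j} := by
    ext ⟨a, b⟩
    simp only [codeCell, Set.mem_setOf_eq, prod_distToCode hperf hperf']
  rw [hcell, prod_nbr_split]
  have e1 : {y | (y, x') ∈ {p : (Fin n → Fin q) × (Fin n' → Fin q') |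
      eCode C p.1 + eCode C' p.2 = j}} = {y : Fin n → Fin q | eCode C y + eCode C' x' = j} := rfl
  have e2 : {y' | (x, y') ∈ {p : (Fin n → Fin q) × (Fin n' → Fin q') |
      eCode C p.1 + eCode C' p.2 = j}} = {y' : Fin n' → Fin q' | eCode C' y' + eCode C x = j} := by
    ext y'
    simp only [Set.mem_setOf_eq]
    omega
  rw [e1, e2, cnt_level hn hq hδ hperf x _ j, cnt_level hn' hq' hδ' hperf' x' _ j, ← hbal]
  have hk : 1 ≤ n * (q - 1) := Nat.one_le_iff_ne_zero.mpr
    (Nat.mul_ne_zero (by omega) (by omega))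
  rcases eCode_cases C x with ⟨hb, -⟩ | ⟨hb, -⟩ <;>
    rcases eCode_cases C' x' with ⟨hb', -⟩ | ⟨hb', -⟩ <;>
    rw [hb, hb'] <;>
    simp only [Nat.zero_add, Nat.add_zero, Nat.reduceAdd] <;>
    unfold tbl <;>
    split_ifs <;>
    first
      | omega
      | simp_all
      | (exfalso; tauto)

end Master

section Final

variable {n q n' q' : ℕ} {C : Set (Fin n → Fin q)} {C' : Set (Fin n' → Fin q')}

lemma prod_covRad (hn : 1 ≤ n) (hq : 2 ≤ q) (hn' : 1 ≤ n') (hq' : 2 ≤ q')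
    (hδ : ∀ x ∈ C, ∀ y ∈ C, x ≠ y → 3 ≤ hammingDist x y)
    (hperf : ∀ x : Fin n → Fin q, ∃! c : Fin n → Fin q, c ∈ C ∧ hammingDist x c ≤ 1)
    (hδ' : ∀ x ∈ C', ∀ y ∈ C', x ≠ y → 3 ≤ hammingDist x y)
    (hperf' : ∀ x : Fin n' → Fin q', ∃! c : Fin n' → Fin q', c ∈ C' ∧ hammingDist x c ≤ 1) :
    covRad (hammingGraph n (Fin q) □ hammingGraph n' (Fin q')) (C ×ˢ C') = 2 := by
  obtain ⟨x0, hx0⟩ := exists_not_code hn hq hδ hperf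
  obtain ⟨x0', hx0'⟩ := exists_not_code hn' hq' hδ' hperf'
  unfold covRad
  have hub : ∀ d ∈ {d | ∃ p, distToCode
      (hammingGraph n (Fin q) □ hammingGraph n' (Fin q')) (C ×ˢ C') p = d}, d ≤ 2 := by
    rintro d ⟨⟨a, b⟩, rfl⟩
    rw [prod_distToCode hperf hperf']
    have := eCode_le_one C a
    have := eCode_le_one C' b
    omega
  have hmem : (2 : ℕ) ∈ {d | ∃ p, distToCode
      (hammingGraph n (Fin q) □ hammingGraph n' (Fin q')) (C ×ˢ C') p = d} :=
    ⟨(x0, x0'), by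
      rw [prod_distToCode hperf hperf', eCode_of_not_mem hx0, eCode_of_not_mem hx0']⟩
  exact le_antisymm (csSup_le ⟨2, hmem⟩ hub) (le_csSup ⟨2, hub⟩ hmem)

end Final


/-- the product of two perfect codes of covering radius one (with
`n(q-1) = n'(q'-1)`) is completely regular of covering radius 2 with intersection
numbers `γ₁ = 1, γ₂ = 2, β₀ = 2n(q-1), β₁ = n(q-1), α₀ = 0, α₁ = n(q-1)-1,
α₂ = 2n(q-1)-2`. -/
theorem product_of_perfect_codes {n q n' q' : ℕ}
    (hn : 1 ≤ n) (hq : 2 ≤ q) (hn' : 1 ≤ n') (hq' : 2 ≤ q')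
    (C : Set (Fin n → Fin q)) (C' : Set (Fin n' → Fin q'))
    (hδ : ∀ x ∈ C, ∀ y ∈ C, x ≠ y → 3 ≤ hammingDist x y)
    (hperf : ∀ x : Fin n → Fin q, ∃! c : Fin n → Fin q, c ∈ C ∧ hammingDist x c ≤ 1)
    (hδ' : ∀ x ∈ C', ∀ y ∈ C', x ≠ y → 3 ≤ hammingDist x y)
    (hperf' : ∀ x : Fin n' → Fin q', ∃! c : Fin n' → Fin q', c ∈ C' ∧ hammingDist x c ≤ 1)
    (hbal : n * (q - 1) = n' * (q' - 1)) :
    IsCompRegCode (hammingGraph n (Fin q) □ hammingGraph n' (Fin q')) (C ×ˢ C') ∧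
    covRad (hammingGraph n (Fin q) □ hammingGraph n' (Fin q')) (C ×ˢ C') = 2 ∧
    HasIntNums (hammingGraph n (Fin q) □ hammingGraph n' (Fin q')) (C ×ˢ C') 2
      (fun i => i)
      (fun i => i * (n * (q - 1)) - i)
      (fun i => (2 - i) * (n * (q - 1))) := by
  have hmaster := master hn hq hn' hq' hδ hperf hδ' hperf' hbal
  refine ⟨?_, prod_covRad hn hq hn' hq' hδ hperf hδ' hperf', ?_⟩
  · intro i j x hx y hy
    obtain ⟨x1, x2⟩ := x
    obtain ⟨y1, y2⟩ := y
    have hxs : eCode C x1 + eCode C' x2 = i := by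
      simpa [codeCell, prod_distToCode hperf hperf'] using hx
    have hys : eCode C y1 + eCode C' y2 = i := by
      simpa [codeCell, prod_distToCode hperf hperf'] using hy
    rw [hmaster x1 x2 j, hmaster y1 y2 j, hxs, hys]
  · refine ⟨rfl, by simp, ?_⟩
    intro i hi x hx
    obtain ⟨x1, x2⟩ := x
    have hsum : eCode C x1 + eCode C' x2 = i := by
      simpa [codeCell, prod_distToCode hperf hperf'] using hx
    refine ⟨?_, ?_, ?_⟩
    · intro hge
      rw [hmaster x1 x2 (i - 1), hsum]
      interval_cases i
      · simp [tbl]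
      · simp [tbl]
    · rw [hmaster x1 x2 i, hsum]
      interval_cases i
      · simp [tbl]
      · simp only [tbl]
        norm_num
      · simp only [tbl]
        norm_num
    · intro hlt
      rw [hmaster x1 x2 (i + 1), hsum]
      interval_cases i
      · simp only [tbl]
        norm_num
      · simp only [tbl]
        norm_num
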